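/- Let θ, q ∈ ℚ_2 with 0 < |θ−1|_2 < |q|_2 < 1 and let r ∈ ℕ with |q|_2 = 2^(−r). Then the cubic y³ − (1+θ+θ²)y² − (2θ+1)(1−θ−q)y − (1−θ−q)² has no root y ∈ ℚ_2 with |y|_2 = 2^(−r). -/

import Mathlib

lemma unit_sub_one_lt (x : ℚ_[2]) (hx : ‖x‖ = 1) : ‖x - 1‖ < 1 := by
  set z : ℤ_[2] := ⟨x, hx.le⟩ with hz
  have hzu : IsUnit z := PadicInt.isUnit_iff.mpr (by rw [PadicInt.norm_def]; exact hx)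
  have h1 : PadicInt.toZMod z = 1 := by
    have h := hzu.map (PadicInt.toZMod (p := 2))
    revert h
    generalize PadicInt.toZMod z = a
    revert a; decide
  have hk : z - 1 ∈ RingHom.ker (PadicInt.toZMod (p := 2)) := by
    simp [RingHom.mem_ker, map_sub, h1]
  rw [PadicInt.ker_toZMod, PadicInt.maximalIdeal_eq_span_p, Ideal.mem_span_singleton] at hk
  have h2 := (PadicInt.norm_lt_one_iff_dvd (z - 1)).mpr hk
  simpa [PadicInt.norm_def] using h2

lemma norm_three : ‖(3 : ℚ_[2])‖ = 1 := by
  have hle : ‖((3 : ℤ) : ℚ_[2])‖ ≤ 1 := Padic.norm_int_le_one 3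
  have hnlt : ¬ ‖((3 : ℤ) : ℚ_[2])‖ < 1 := by
    rw [Padic.norm_intCast_lt_one_iff]
    decide
  have : ‖((3 : ℤ) : ℚ_[2])‖ = 1 := le_antisymm hle (not_lt.mp hnlt)
  simpa using this

/-- In `ℚ_2`, if `0 < ‖θ-1‖ < ‖q‖ < 1` and `‖q‖ = 2^(-r)`, the fixed-point
cubic has no root of norm `2^(-r)`. -/
theorem cubic_no_small_root_in_Q2 (θ q : ℚ_[2]) (r : ℕ)
    (h1 : 0 < ‖θ - 1‖) (h2 : ‖θ - 1‖ < ‖q‖) (h3 : ‖q‖ < 1)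
    (hq : ‖q‖ = (2 : ℝ) ^ (-(r : ℤ))) :
    ∀ y : ℚ_[2], ‖y‖ = (2 : ℝ) ^ (-(r : ℤ)) →
      y ^ 3 - (1 + θ + θ ^ 2) * y ^ 2 - (2 * θ + 1) * (1 - θ - q) * y
        - (1 - θ - q) ^ 2 ≠ 0 := by
  intro y hy heq
  have hθ1 : ‖θ - 1‖ < 1 := h2.trans h3
  -- the scaling factor p = 2^r
  set P : ℚ_[2] := (2 : ℚ_[2]) ^ r with hP
  have hPnorm : ‖P‖ = (2 : ℝ) ^ (-(r : ℤ)) := by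
    have := Padic.norm_p_pow (p := 2) r
    simpa [hP] using this
  have hPpos : (0 : ℝ) < (2 : ℝ) ^ (-(r : ℤ)) := by positivity
  have hPne : P ≠ 0 := by
    intro h
    rw [h, norm_zero] at hPnorm
    exact absurd hPnorm.symm (ne_of_gt hPpos)
  -- a = 1 - θ - q has norm ‖q‖
  set a : ℚ_[2] := 1 - θ - q with ha
  have hanorm : ‖a‖ = (2 : ℝ) ^ (-(r : ℤ)) := by
    have hne : ‖-q‖ ≠ ‖1 - θ‖ := by
      rw [norm_neg]
      have : ‖1 - θ‖ = ‖θ - 1‖ := by rw [← norm_neg]; ring_nf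
      rw [this]; exact (ne_of_gt h2)
    have : a = -q + (1 - θ) := by rw [ha]; ring
    rw [this, Padic.add_eq_max_of_ne hne, norm_neg]
    have h1θ : ‖1 - θ‖ = ‖θ - 1‖ := by rw [← norm_neg]; ring_nf
    rw [h1θ, max_eq_left h2.le, hq]
  -- normalized unit parts
  set t : ℚ_[2] := y / P with ht
  set b : ℚ_[2] := a / P with hb
  have htn : ‖t‖ = 1 := by
    rw [ht, norm_div, hy, hPnorm, div_self (ne_of_gt hPpos)]
  have hbn : ‖b‖ = 1 := by
    rw [hb, norm_div, hanorm, hPnorm, div_self (ne_of_gt hPpos)]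
  -- coefficients are units
  have hc1 : ‖(1 + θ + θ ^ 2 : ℚ_[2])‖ = 1 := by
    have hdecomp : (1 + θ + θ ^ 2 : ℚ_[2]) = 3 + (θ - 1) * (θ + 2) := by ring
    have hsmall : ‖(θ - 1) * (θ + 2)‖ < 1 := by
      rw [norm_mul]
      have h2le : ‖θ + 2‖ ≤ 1 := by
        have : θ + 2 = (θ - 1) + 3 := by ring
        rw [this]
        refine le_trans (Padic.nonarchimedean _ _) ?_
        exact max_le hθ1.le norm_three.le
      calc ‖θ - 1‖ * ‖θ + 2‖ ≤ ‖θ - 1‖ * 1 := by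
            exact mul_le_mul_of_nonneg_left h2le (norm_nonneg _)
        _ < 1 := by rwa [mul_one]
    have hne : ‖(3 : ℚ_[2])‖ ≠ ‖(θ - 1) * (θ + 2)‖ := by
      rw [norm_three]; exact ne_of_gt hsmall
    rw [hdecomp, Padic.add_eq_max_of_ne hne, norm_three, max_eq_left hsmall.le]
  have hc2 : ‖(2 * θ + 1 : ℚ_[2])‖ = 1 := by
    have hdecomp : (2 * θ + 1 : ℚ_[2]) = 3 + 2 * (θ - 1) := by ring
    have hsmall : ‖(2 : ℚ_[2]) * (θ - 1)‖ < 1 := by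
      rw [norm_mul]
      have h2le : ‖(2 : ℚ_[2])‖ ≤ 1 := by
        have h := Padic.norm_p (p := 2)
        norm_num at h
        rw [h]; norm_num
      calc ‖(2 : ℚ_[2])‖ * ‖θ - 1‖ ≤ 1 * ‖θ - 1‖ :=
            mul_le_mul_of_nonneg_right h2le (norm_nonneg _)
        _ < 1 := by rwa [one_mul]
    have hne : ‖(3 : ℚ_[2])‖ ≠ ‖(2 : ℚ_[2]) * (θ - 1)‖ := by
      rw [norm_three]; exact ne_of_gt hsmall
    rw [hdecomp, Padic.add_eq_max_of_ne hne, norm_three, max_eq_left hsmall.le]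
  -- the three unit summands
  set u1 : ℚ_[2] := (1 + θ + θ ^ 2) * t ^ 2 with hu1
  set u2 : ℚ_[2] := (2 * θ + 1) * b * t with hu2
  set u3 : ℚ_[2] := b ^ 2 with hu3
  have hu1n : ‖u1‖ = 1 := by rw [hu1, norm_mul, norm_pow, hc1, htn]; norm_num
  have hu2n : ‖u2‖ = 1 := by rw [hu2, norm_mul, norm_mul, hc2, hbn, htn]; norm_num
  have hu3n : ‖u3‖ = 1 := by rw [hu3, norm_pow, hbn]; norm_num
  -- sum of three units is a unit (2-adically: odd+odd+odd = odd)
  have hSn : ‖u1 + u2 + u3‖ = 1 := by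
    have hd : u1 + u2 + u3 = 3 + ((u1 - 1) + (u2 - 1) + (u3 - 1)) := by ring
    have hs : ‖(u1 - 1) + (u2 - 1) + (u3 - 1)‖ < 1 := by
      refine lt_of_le_of_lt (Padic.nonarchimedean _ _) ?_
      refine max_lt (lt_of_le_of_lt (Padic.nonarchimedean _ _) ?_) ?_
      · exact max_lt (unit_sub_one_lt _ hu1n) (unit_sub_one_lt _ hu2n)
      · exact unit_sub_one_lt _ hu3n
    have hne : ‖(3 : ℚ_[2])‖ ≠ ‖(u1 - 1) + (u2 - 1) + (u3 - 1)‖ := by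
      rw [norm_three]; exact ne_of_gt hs
    rw [hd, Padic.add_eq_max_of_ne hne, norm_three, max_eq_left hs.le]
  -- g = P t^3 - (u1+u2+u3) has norm 1
  set g : ℚ_[2] := P * t ^ 3 - (u1 + u2 + u3) with hg
  have hPt3 : ‖P * t ^ 3‖ < 1 := by
    rw [norm_mul, hPnorm, norm_pow, htn]
    simpa using (hq ▸ h3 : (2 : ℝ) ^ (-(r : ℤ)) < 1)
  have hgn : ‖g‖ = 1 := by
    have hne : ‖P * t ^ 3‖ ≠ ‖-(u1 + u2 + u3)‖ := by
      rw [norm_neg, hSn]; exact ne_of_lt hPt3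
    have : g = P * t ^ 3 + -(u1 + u2 + u3) := by rw [hg]; ring
    rw [this, Padic.add_eq_max_of_ne hne, norm_neg, hSn]
    exact max_eq_right hPt3.le
  have hgne : g ≠ 0 := by
    intro h; rw [h, norm_zero] at hgn; norm_num at hgn
  -- the algebraic identity
  have hPt : P * t = y := by rw [ht]; field_simp
  have hPb : P * b = a := by rw [hb]; field_simp
  have heq' : (P * t) ^ 3 - (1 + θ + θ ^ 2) * (P * t) ^ 2
      - (2 * θ + 1) * (P * b) * (P * t) - (P * b) ^ 2 = 0 := by
    rw [hPb, hPt]; exact heq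
  have hz : P ^ 2 * g = 0 := by
    rw [hg, hu1, hu2, hu3]
    linear_combination heq'
  rcases mul_eq_zero.mp hz with h | h
  · exact hPne (pow_eq_zero_iff (by norm_num) |>.mp h)
  · exact hgne h
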